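/- arXiv:1804.00802 — 4 statements merged into one kernel-verified Lean document; each statement's English description precedes it below -/
import Mathlib

section
/- If $0 < k \le 1$ and $r \ge 2$ is a real number, then $\frac{3}{r^k} - \frac{3}{(r-1)^k + 3} \ge \frac{1}{r^{2k}}$. -/
lemma real_rpow_add_le_add_rpow {x y p : ℝ} (hx : 0 ≤ x) (hy : 0 ≤ y)
    (hp0 : 0 ≤ p) (hp1 : p ≤ 1) : (x + y) ^ p ≤ x ^ p + y ^ p := by
  have h := NNReal.rpow_add_le_add_rpow ⟨x, hx⟩ ⟨y, hy⟩ hp0 hp1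
  have := NNReal.coe_le_coe.2 h
  push_cast [NNReal.coe_rpow] at this
  convert this using 2 <;> rfl

theorem rpow_ineq_one (k r : ℝ) (hk0 : 0 < k) (hk1 : k ≤ 1) (hr : 2 ≤ r) :
    3 / r ^ k - 3 / ((r - 1) ^ k + 3) ≥ 1 / r ^ (2 * k) := by
  have hr0 : (0:ℝ) < r := by linarith
  have hr1 : (0:ℝ) ≤ r - 1 := by linarith
  set a := r ^ k with ha
  set b := (r - 1) ^ k with hb
  have ha1 : 1 < a := Real.one_lt_rpow_iff_of_pos hr0 |>.2 (Or.inl ⟨by linarith, hk0⟩)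
  have hb1 : 1 ≤ b := by
    rw [hb]
    calc (1:ℝ) = 1 ^ k := (Real.one_rpow k).symm
    _ ≤ (r - 1) ^ k := Real.rpow_le_rpow (by norm_num) (by linarith) hk0.le
  have hab : a ≤ b + 1 := by
    have := real_rpow_add_le_add_rpow hr1 (zero_le_one) hk0.le hk1
    simpa [Real.one_rpow] using this
  have h2k : r ^ (2 * k) = a ^ 2 := by
    rw [mul_comm, Real.rpow_mul hr0.le, ha, Real.rpow_two]
  rw [h2k, ge_iff_le]
  have ha0 : (0:ℝ) < a := by linarith
  have hb3 : (0:ℝ) < b + 3 := by linarith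
  rw [div_sub_div _ _ (by positivity) (by positivity), div_le_div_iff₀ (by positivity) (by positivity)]
  nlinarith [sq_nonneg a, mul_pos ha0 hb3, sq_nonneg (a-1)]
end

section
/- Define a sequence $(\Sigma_r)_{r \ge 1}$ of reals by $\Sigma_1 \le 3$ (with $\Sigma_1 > 0$) and $\Sigma_{r+1} = \frac{1}{(r+1)^k} + \frac{\Sigma_r}{\Sigma_r + 1}$ for a fixed $0 < k \le 2$. Then $\Sigma_r \le \frac{3}{r^{k/2}}$ for all $r \ge 1$. -/
lemma rpow_subadd_one (x p : ℝ) (hx : 0 ≤ x) (hp0 : 0 ≤ p) (hp1 : p ≤ 1) :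
    (x + 1) ^ p ≤ x ^ p + 1 := by
  lift x to NNReal using hx
  have h := NNReal.rpow_add_le_add_rpow x 1 hp0 hp1
  have h2 : ((((x : NNReal) + 1) ^ p : NNReal) : ℝ) ≤ (((x ^ p + 1 ^ p : NNReal)) : ℝ) := by
    exact_mod_cast h
  simpa [NNReal.coe_rpow, NNReal.rpow_one, Real.one_rpow] using h2

theorem variance_recursion_bound (k : ℝ) (hk0 : 0 < k) (hk2 : k ≤ 2)
    (V : ℕ → ℝ) (h1 : V 1 ≤ 3) (h1pos : 0 < V 1)
    (hrec : ∀ r : ℕ, 1 ≤ r → V (r + 1) = 1 / ((r : ℝ) + 1) ^ k + V r / (V r + 1)) :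
    ∀ r : ℕ, 1 ≤ r → V r ≤ 3 / (r : ℝ) ^ (k / 2) := by
  have main : ∀ r : ℕ, 1 ≤ r → 0 < V r ∧ V r ≤ 3 / (r : ℝ) ^ (k / 2) := by
    intro r hr
    induction r with
    | zero => omega
    | succ n ih =>
      rcases Nat.lt_or_ge n 1 with h | hn
      · have hn0 : n = 0 := by omega
        subst hn0
        refine ⟨h1pos, ?_⟩
        norm_num
        simpa using h1
      · obtain ⟨hpos, hle⟩ := ih hn
        have hrw := hrec n hn
        set a : ℝ := (n : ℝ) ^ (k / 2) with ha
        set b : ℝ := ((n : ℝ) + 1) ^ (k / 2) with hb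
        have hnpos : (0:ℝ) < (n : ℝ) := by exact_mod_cast hn
        have hapos : 0 < a := Real.rpow_pos_of_pos hnpos _
        have hbpos : 0 < b := Real.rpow_pos_of_pos (by linarith) _
        have hb1 : 1 ≤ b := Real.one_le_rpow (by linarith) (by positivity)
        have hba : b ≤ a + 1 := rpow_subadd_one (n : ℝ) (k / 2) hnpos.le
          (by positivity) (by linarith)
        have hbb : ((n : ℝ) + 1) ^ k = b * b := by
          rw [show k = k / 2 + k / 2 by ring, Real.rpow_add (by linarith)]
        -- bound the fraction
        have hfrac : V n / (V n + 1) ≤ 3 / (a + 3) := by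
          rw [div_le_div_iff₀ (by linarith) (by linarith)]
          have : V n * a ≤ 3 := (le_div_iff₀ hapos).mp hle
          nlinarith
        have hkey : 1 / (b * b) + 3 / (a + 3) ≤ 3 / b := by
          have h1' : 3 / (a + 3) ≤ 3 / (b + 2) := by
            apply div_le_div_of_nonneg_left (by norm_num) (by linarith) (by linarith)
          have h2' : 1 / (b * b) + 3 / (b + 2) ≤ 3 / b := by
            rw [div_add_div _ _ (by nlinarith) (by linarith),
              div_le_div_iff₀ (by nlinarith) (by linarith)]
            nlinarith
          linarith
        have hVpos : 0 < V (n + 1) := by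
          rw [hrw]
          have : 0 ≤ V n / (V n + 1) := by positivity
          have : 0 < 1 / ((n : ℝ) + 1) ^ k := by positivity
          linarith
        refine ⟨hVpos, ?_⟩
        rw [hrw]
        have hcast : ((n + 1 : ℕ) : ℝ) = (n : ℝ) + 1 := by push_cast; ring
        rw [hcast, hbb]
        linarith
  intro r hr
  exact (main r hr).2
end

section
/- Let $(\Sigma_r)$ satisfy $\Sigma_1 \le 3$, $\Sigma_r > 0$, and $\Sigma_{r+1} = \frac{1}{(r+1)^k} + \frac{\Sigma_r}{\Sigma_r+1}$ with $0 < k < 2$. Then $\sum_{r=1}^R \Sigma_r \le \frac{6}{2-k} R^{1 - k/2}$ for every positive integer $R$. -/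
/-- Weighted AM-GM consequence: `x^(1-a) * (x+1)^a ≤ x + a`. -/
lemma amgm_key (a : ℝ) (ha0 : 0 < a) (ha1 : a < 1) (x : ℝ) (hx : 0 ≤ x) :
    x ^ (1 - a) * (x + 1) ^ a ≤ x + a := by
  have h := Real.geom_mean_le_arith_mean2_weighted (by linarith : (0:ℝ) ≤ 1 - a)
    ha0.le hx (by linarith : (0:ℝ) ≤ x + 1) (by ring)
  nlinarith [h]

/-- Partial sum bound for `r^(-a)`, `0 < a < 1`. -/
lemma sum_rpow_bound (a : ℝ) (ha0 : 0 < a) (ha1 : a < 1) :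
    ∀ R : ℕ, 1 ≤ R →
      ∑ r ∈ Finset.Icc 1 R, ((r : ℝ)) ^ (-a) ≤ (1 / (1 - a)) * (R : ℝ) ^ (1 - a) := by
  intro R hR
  induction R, hR using Nat.le_induction with
  | base =>
      simp only [Finset.Icc_self, Finset.sum_singleton, Nat.cast_one]
      rw [Real.one_rpow, Real.one_rpow, mul_one, le_div_iff₀ (by linarith), one_mul]
      linarith
  | succ R hR ih =>
      rw [Finset.sum_Icc_succ_top (by omega : 1 ≤ R + 1)]
      have hRpos : (0:ℝ) < (R:ℝ) := by exact_mod_cast hR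
      have hR1pos : (0:ℝ) < (R:ℝ) + 1 := by linarith
      push_cast
      have hkey := amgm_key a ha0 ha1 (R:ℝ) hRpos.le
      -- R^(1-a) ≤ (R + a) * (R+1)^(-a)
      have hmul : ((R:ℝ)) ^ (1 - a) ≤ ((R:ℝ) + a) * ((R:ℝ) + 1) ^ (-a) := by
        have h2 : ((R:ℝ)) ^ (1 - a) = ((R:ℝ)) ^ (1 - a) * (((R:ℝ) + 1) ^ a * ((R:ℝ) + 1) ^ (-a)) := by
          rw [← Real.rpow_add hR1pos]
          simp
        rw [h2, ← mul_assoc]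
        exact mul_le_mul_of_nonneg_right hkey (Real.rpow_nonneg hR1pos.le _)
      have hsplit : ((R:ℝ) + 1) ^ (1 - a) = ((R:ℝ) + 1) * ((R:ℝ) + 1) ^ (-a) := by
        nth_rewrite 2 [show ((R:ℝ) + 1) = ((R:ℝ) + 1) ^ (1:ℝ) by rw [Real.rpow_one]]
        rw [← Real.rpow_add hR1pos]
        ring_nf
      rw [hsplit]
      have hpow : (0:ℝ) ≤ ((R:ℝ) + 1) ^ (-a) := Real.rpow_nonneg hR1pos.le _
      have hfrac : (0:ℝ) < 1 - a := by linarith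
      calc ∑ r ∈ Finset.Icc 1 R, ((r : ℝ)) ^ (-a) + ((R:ℝ) + 1) ^ (-a)
          ≤ (1 / (1 - a)) * ((R:ℝ)) ^ (1 - a) + ((R:ℝ) + 1) ^ (-a) := by linarith
        _ ≤ (1 / (1 - a)) * (((R:ℝ) + a) * ((R:ℝ) + 1) ^ (-a)) + ((R:ℝ) + 1) ^ (-a) := by
            have := mul_le_mul_of_nonneg_left hmul (le_of_lt (by positivity : (0:ℝ) < 1 / (1 - a)))
            linarith
        _ = (1 / (1 - a)) * (((R:ℝ) + 1) * ((R:ℝ) + 1) ^ (-a)) := by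
            field_simp
            ring
        _ ≤ (1 / (1 - a)) * (((R:ℝ) + 1) * ((R:ℝ) + 1) ^ (-a)) := le_refl _

theorem variance_sum_bound (k : ℝ) (hk0 : 0 < k) (hk2 : k < 2)
    (V : ℕ → ℝ) (h1 : V 1 ≤ 3) (hpos : ∀ r : ℕ, 1 ≤ r → 0 < V r)
    (hrec : ∀ r : ℕ, 1 ≤ r → V (r + 1) = 1 / ((r : ℝ) + 1) ^ k + V r / (V r + 1))
    (R : ℕ) (hR : 0 < R) :
    ∑ r ∈ Finset.Icc 1 R, V r ≤ (6 / (2 - k)) * (R : ℝ) ^ (1 - k / 2) := by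
  -- Pointwise bound: V r ≤ 3 * r^(-(k/2))
  have hpt : ∀ r : ℕ, 1 ≤ r → V r ≤ 3 * (r : ℝ) ^ (-(k/2)) := by
    intro r hr
    induction r, hr using Nat.le_induction with
    | base => simpa using h1
    | succ r hr ih =>
        have hrpos : (0:ℝ) < (r:ℝ) := by exact_mod_cast hr
        have hr1pos : (0:ℝ) < (r:ℝ) + 1 := by linarith
        set s : ℝ := (r:ℝ) ^ (k/2) with hs
        set t : ℝ := ((r:ℝ) + 1) ^ (k/2) with ht
        have hspos : 0 < s := Real.rpow_pos_of_pos hrpos _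
        have htpos : 0 < t := Real.rpow_pos_of_pos hr1pos _
        have hs1 : 1 ≤ s := Real.one_le_rpow (by exact_mod_cast hr) (by positivity)
        have hst : s ≤ t := Real.rpow_le_rpow hrpos.le (by linarith) (by positivity)
        have hsr : s ≤ (r:ℝ) := by
          calc s = (r:ℝ) ^ (k/2) := hs
            _ ≤ (r:ℝ) ^ (1:ℝ) := Real.rpow_le_rpow_of_exponent_le (by exact_mod_cast hr) (by linarith)
            _ = (r:ℝ) := Real.rpow_one _
        have htr : t * (r:ℝ) ≤ s * ((r:ℝ) + 1) := by
          -- ((r+1)/r)^(k/2) ≤ (r+1)/r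
          have hbase : (1:ℝ) ≤ ((r:ℝ) + 1) / (r:ℝ) := by
            rw [le_div_iff₀ hrpos]; linarith
          have h2 : (((r:ℝ) + 1) / (r:ℝ)) ^ (k/2) ≤ (((r:ℝ) + 1) / (r:ℝ)) ^ (1:ℝ) :=
            Real.rpow_le_rpow_of_exponent_le hbase (by linarith)
          rw [Real.rpow_one, Real.div_rpow hr1pos.le hrpos.le] at h2
          rw [div_le_div_iff₀ (Real.rpow_pos_of_pos hrpos _) hrpos] at h2
          calc t * (r:ℝ) = ((r:ℝ) + 1) ^ (k/2) * (r:ℝ) := by rw [ht]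
            _ ≤ ((r:ℝ) + 1) * (r:ℝ) ^ (k/2) := h2
            _ = s * ((r:ℝ) + 1) := by rw [hs]; ring
        have hpoly : 3 + s + 3 * t ^ 2 ≤ 9 * t + 3 * t * s := by
          nlinarith [mul_nonneg (sub_nonneg.2 hst) (sub_nonneg.2 htr),
            mul_nonneg (sub_nonneg.2 hs1) (sub_nonneg.2 hsr),
            mul_pos (lt_of_lt_of_le one_pos hs1) hrpos,
            sq_nonneg (t - s), mul_nonneg (sub_nonneg.2 hst) (sub_nonneg.2 hsr)]
        have hVr := hpos r hr
        -- V r / (V r + 1) ≤ 3 / (3 + s)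
        have hVs : V r * s ≤ 3 := by
          have : V r ≤ 3 * (r:ℝ) ^ (-(k/2)) := ih
          have hinv : (r:ℝ) ^ (-(k/2)) = 1 / s := by
            rw [Real.rpow_neg hrpos.le, hs, one_div]
          rw [hinv] at this
          calc V r * s ≤ (3 * (1/s)) * s := by
                exact mul_le_mul_of_nonneg_right this hspos.le
            _ = 3 := by field_simp
        have hfrac : V r / (V r + 1) ≤ 3 / (3 + s) := by
          rw [div_le_div_iff₀ (by linarith) (by linarith)]
          nlinarith [hVs]
        -- (r+1)^k = t * t
        have htk : ((r:ℝ) + 1) ^ k = t * t := by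
          rw [ht, ← Real.rpow_add hr1pos]
          ring_nf
        have hgoal2 : 1 / (t * t) + 3 / (3 + s) ≤ 3 / t := by
          rw [div_add_div _ _ (by positivity) (by positivity : (3:ℝ) + s ≠ 0),
            div_le_div_iff₀ (by positivity) htpos]
          nlinarith [hpoly, mul_pos htpos hspos, mul_pos (mul_pos htpos htpos) hspos]
        have htinv : 3 * ((r:ℝ) + 1) ^ (-(k/2)) = 3 / t := by
          rw [Real.rpow_neg hr1pos.le, ht, div_eq_mul_inv]
          ring_nf
        rw [hrec r hr, htk]
        push_cast
        rw [htinv]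
        calc 1 / (t * t) + V r / (V r + 1) ≤ 1 / (t * t) + 3 / (3 + s) := by linarith
          _ ≤ 3 / t := hgoal2
  -- Sum it up
  have hsum := sum_rpow_bound (k/2) (by linarith) (by linarith) R hR
  have hle : ∑ r ∈ Finset.Icc 1 R, V r ≤ ∑ r ∈ Finset.Icc 1 R, 3 * ((r:ℝ)) ^ (-(k/2)) := by
    apply Finset.sum_le_sum
    intro i hi
    exact hpt i (Finset.mem_Icc.1 hi).1
  have hconst : (6 / (2 - k)) = 3 * (1 / (1 - k/2)) := by
    field_simp
    ring
  calc ∑ r ∈ Finset.Icc 1 R, V r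
      ≤ ∑ r ∈ Finset.Icc 1 R, 3 * ((r:ℝ)) ^ (-(k/2)) := hle
    _ = 3 * ∑ r ∈ Finset.Icc 1 R, ((r:ℝ)) ^ (-(k/2)) := by rw [Finset.mul_sum]
    _ ≤ 3 * ((1 / (1 - k/2)) * (R : ℝ) ^ (1 - k/2)) := by
        apply mul_le_mul_of_nonneg_left hsum (by norm_num)
    _ = (6 / (2 - k)) * (R : ℝ) ^ (1 - k / 2) := by rw [hconst]; ring
end

section
/- Let $(\Sigma_r)$ satisfy $\Sigma_1 \le 3$, $\Sigma_r > 0$, and $\Sigma_{r+1} = \frac{1}{(r+1)^k} + \frac{\Sigma_r}{\Sigma_r+1}$ with $k \ge 2$. Then $\Sigma_r \le \frac{3}{r}$ for all $r \ge 1$, and hence $\sum_{r=1}^R \Sigma_r \le 3 \ln R + 3$. -/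
lemma harm_le_log (R : ℕ) (hR : 0 < R) :
    ∑ r ∈ Finset.Icc 1 R, (1 : ℝ) / r ≤ Real.log R + 1 := by
  induction R with
  | zero => omega
  | succ n ih =>
    rcases Nat.eq_zero_or_pos n with h0 | hn
    · subst h0; simp
    · rw [Finset.sum_Icc_succ_top (by omega)]
      have key : (1 : ℝ) / (n + 1) ≤ Real.log (n + 1) - Real.log n := by
        have hn' : (0 : ℝ) < n := by exact_mod_cast hn
        have hx : (0 : ℝ) < (n : ℝ) / (n + 1) := by positivity
        have := Real.log_le_sub_one_of_pos hx
        rw [Real.log_div (by positivity) (by positivity)] at this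
        have h1 : (n : ℝ) / (n + 1) - 1 = -(1 / (n + 1)) := by field_simp; ring
        linarith [this, h1 ▸ this]
      have := ih hn
      push_cast
      push_cast at this key
      linarith
theorem variance_sum_bound_large_k (k : ℝ) (hk : 2 ≤ k)
    (V : ℕ → ℝ) (h1 : V 1 ≤ 3) (hpos : ∀ r : ℕ, 1 ≤ r → 0 < V r)
    (hrec : ∀ r : ℕ, 1 ≤ r → V (r + 1) = 1 / ((r : ℝ) + 1) ^ k + V r / (V r + 1)) :
    (∀ r : ℕ, 1 ≤ r → V r ≤ 3 / (r : ℝ)) ∧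
      ∀ R : ℕ, 0 < R → ∑ r ∈ Finset.Icc 1 R, V r ≤ 3 * Real.log R + 3 := by
  have main : ∀ r : ℕ, 1 ≤ r → V r ≤ 3 / (r : ℝ) := by
    intro r hr
    induction r, hr using Nat.le_induction with
    | base => simpa using h1
    | succ n hn ih =>
      have hVn := hpos n hn
      have hn' : (1 : ℝ) ≤ n := by exact_mod_cast hn
      rw [hrec n hn]
      have hfrac : V n / (V n + 1) ≤ 3 / ((n : ℝ) + 3) := by
        rw [div_le_div_iff₀ (by linarith) (by linarith)]
        have : V n * n ≤ 3 := (le_div_iff₀ (by positivity)).mp ih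
        nlinarith
      have hpow : 1 / ((n : ℝ) + 1) ^ k ≤ 1 / ((n : ℝ) + 1) ^ 2 := by
        have hx : (1 : ℝ) ≤ (n : ℝ) + 1 := by linarith
        have h2 : ((n : ℝ) + 1) ^ (2 : ℝ) ≤ ((n : ℝ) + 1) ^ k :=
          Real.rpow_le_rpow_of_exponent_le hx hk
        rw [show ((n : ℝ) + 1) ^ (2 : ℝ) = ((n : ℝ) + 1) ^ (2 : ℕ) by
          rw [← Real.rpow_natCast]; norm_num] at h2
        apply one_div_le_one_div_of_le (by positivity) h2
      have hfin : 1 / ((n : ℝ) + 1) ^ 2 + 3 / ((n : ℝ) + 3) ≤ 3 / ((n : ℝ) + 1) := by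
        rw [div_add_div _ _ (by positivity) (by positivity), div_le_div_iff₀ (by positivity) (by positivity)]
        ring_nf
        nlinarith
      push_cast
      linarith
  refine ⟨main, fun R hR => ?_⟩
  have h1' : ∑ r ∈ Finset.Icc 1 R, V r ≤ ∑ r ∈ Finset.Icc 1 R, 3 * ((1 : ℝ) / r) := by
    apply Finset.sum_le_sum
    intro i hi
    simp only [Finset.mem_Icc] at hi
    have := main i hi.1
    rw [mul_one_div]
    linarith
  rw [← Finset.mul_sum] at h1'
  have := harm_le_log R hR
  nlinarith
end
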